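/- The unnormalized ℤ_M zero-flux ground state Φ_M = (∏_v (1/M) ∑_{j=0}^{M−1} B̂_v^j) δ₀ satisfies: Φ_M ≠ 0; Â_{(x,y)} Φ_M = Φ_M for every plaquette (x,y); B̂_v Φ_M = Φ_M for every star v; and Ŵ_x Φ_M = Φ_M for every column x. -/

import Mathlib

open Finset

noncomputable section

/-- The qudit Hilbert space: complex functions on configurations `ι → ZMod M`. -/
abbrev QuditSpace (ι : Type*) (M : ℕ) := (ι → ZMod M) → ℂ

/-- The root of unity `ω = exp(2πi/M)`. -/
def omegaM (M : ℕ) : ℂ := Complex.exp (2 * Real.pi * Complex.I / M)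

/-- The clock operator `C_u`: `(C_u ψ)(σ) = ω^{∑_b u(b)·σ(b)} ψ(σ)`
(well-defined since `ω^M = 1`). -/
def Cop {ι : Type*} [Fintype ι] {M : ℕ} (u : ι → ZMod M) :
    Module.End ℂ (QuditSpace ι M) where
  toFun ψ := fun σ => omegaM M ^ (∑ b, u b * σ b).val * ψ σ
  map_add' ψ φ := by funext σ; simp [mul_add]
  map_smul' c ψ := by funext σ; simp; ring

/-- The shift operator `S_u`: `(S_u ψ)(σ) = ψ(σ − u)`. -/
def Sop {ι : Type*} {M : ℕ} (u : ι → ZMod M) :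
    Module.End ℂ (QuditSpace ι M) where
  toFun ψ := fun σ => ψ (σ - u)
  map_add' _ _ := rfl
  map_smul' _ _ := rfl

variable (M Lx Ly : ℕ)

/-- Vertices of the `L_x × L_y` square lattice on the torus. -/
abbrev Vertex := ZMod Lx × ZMod Ly

/-- Bonds of the lattice: `((x,y), 0)` is the horizontal bond from `(x,y)` to
`(x+1,y)`, and `((x,y), 1)` the vertical bond from `(x,y)` to `(x,y+1)`. -/
abbrev Bond := (ZMod Lx × ZMod Ly) × Fin 2

variable [NeZero Lx] [NeZero Ly]

/-- The oriented star vector `u_v`: value `1` on `((x,y),0)` and `((x,y),1)`,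
value `−1` on `((x−1,y),0)` and `((x,y−1),1)`, and `0` elsewhere. -/
def starVec (v : Vertex Lx Ly) : Bond Lx Ly → ZMod M := fun b =>
  (if b = (v, 0) then (1 : ZMod M) else 0) + (if b = (v, 1) then 1 else 0) +
    (if b = ((v.1 - 1, v.2), 0) then -1 else 0) +
    (if b = ((v.1, v.2 - 1), 1) then -1 else 0)

/-- The oriented plaquette vector `w_{(x,y)}`: value `1` on `((x,y),0)` and
`((x+1,y),1)`, value `−1` on `((x,y+1),0)` and `((x,y),1)`, `0` elsewhere. -/
def plaqVec (v : Vertex Lx Ly) : Bond Lx Ly → ZMod M := fun b =>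
  (if b = (v, 0) then (1 : ZMod M) else 0) +
    (if b = ((v.1 + 1, v.2), 1) then 1 else 0) +
    (if b = ((v.1, v.2 + 1), 0) then -1 else 0) +
    (if b = (v, 1) then -1 else 0)

/-- The star operator `B̂_v = S_{u_v}`. -/
def Bhat (v : Vertex Lx Ly) : Module.End ℂ (QuditSpace (Bond Lx Ly) M) :=
  Sop (starVec M Lx Ly v)

/-- The plaquette operator `Â_{(x,y)} = C_{w_{(x,y)}}`. -/
def Ahat (v : Vertex Lx Ly) : Module.End ℂ (QuditSpace (Bond Lx Ly) M) :=
  Cop (plaqVec M Lx Ly v)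

/-- The vertical clock Wilson loop `Ŵ_x = C_{𝟙_{Γ_x}}`,
`Γ_x = {((x,y),1) : y}`. -/
def What (x : ZMod Lx) : Module.End ℂ (QuditSpace (Bond Lx Ly) M) :=
  Cop (fun b => if b.1.1 = x ∧ b.2 = 1 then (1 : ZMod M) else 0)

/-- The horizontal shift (dual) Wilson loop `V̂_y = S_{𝟙_{Γ̃_y}}`,
`Γ̃_y = {((x,y),1) : x}`. -/
def Vhat (y : ZMod Ly) : Module.End ℂ (QuditSpace (Bond Lx Ly) M) :=
  Sop (fun b => if b.1.2 = y ∧ b.2 = 1 then (1 : ZMod M) else 0)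

/-- The basis vector at the all-zeros configuration. -/
def delta0M : QuditSpace (Bond Lx Ly) M := fun σ => if σ = 0 then 1 else 0

lemma sop_commute {ι : Type*} {M : ℕ} (u u' : ι → ZMod M) :
    Commute (Sop u) (Sop u') := by
  apply LinearMap.ext; intro ψ; funext σ
  simp only [Module.End.mul_apply]
  show ψ (σ - u - u') = ψ (σ - u' - u)
  rw [sub_right_comm]

/-- The star projector `(1/M) ∑_{j=0}^{M−1} B̂_v^j`. -/
def starProjM (v : Vertex Lx Ly) :
    Module.End ℂ (QuditSpace (Bond Lx Ly) M) :=
  (M : ℂ)⁻¹ • ∑ j ∈ Finset.range M, (Bhat M Lx Ly v) ^ j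

lemma starProjM_commute (v w : Vertex Lx Ly) :
    Commute (starProjM M Lx Ly v) (starProjM M Lx Ly w) := by
  have h : Commute (Bhat M Lx Ly v) (Bhat M Lx Ly w) := sop_commute _ _
  have h' : Commute (∑ j ∈ Finset.range M, (Bhat M Lx Ly v) ^ j)
      (∑ j ∈ Finset.range M, (Bhat M Lx Ly w) ^ j) :=
    Commute.sum_left _ _ _ (fun j _ =>
      Commute.sum_right _ _ _ (fun k _ => h.pow_pow j k))
  exact (h'.smul_left _).smul_right _

/-- The (unnormalized) `ℤ_M` zero-flux ground state
`Φ_M = (∏_v (1/M) ∑_j B̂_v^j) δ₀` (the star operators commute, so the product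
is well-defined). -/
def PhiM : QuditSpace (Bond Lx Ly) M :=
  (Finset.univ.noncommProd (fun v : Vertex Lx Ly => starProjM M Lx Ly v)
    (fun v _ w _ _ => starProjM_commute M Lx Ly v w)) (delta0M M Lx Ly)

/-! ### Auxiliary lemmas -/

lemma cop_sop_commute' {ι : Type*} [Fintype ι] {M : ℕ} (u t : ι → ZMod M)
    (h : ∑ b, u b * t b = 0) : Commute (Cop u) (Sop t) := by
  apply LinearMap.ext; intro ψ; funext σ
  simp only [Module.End.mul_apply]
  show omegaM M ^ (∑ b, u b * σ b).val * ψ (σ - t)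
      = omegaM M ^ (∑ b, u b * (σ - t) b).val * ψ (σ - t)
  have : ∑ b, u b * (σ - t) b = ∑ b, u b * σ b := by
    have : ∑ b, u b * (σ - t) b = ∑ b, (u b * σ b - u b * t b) := by
      apply Finset.sum_congr rfl
      intro b _
      simp [Pi.sub_apply, mul_sub]
    rw [this, Finset.sum_sub_distrib, h, sub_zero]
  rw [this]

lemma sop_pow_apply' {ι : Type*} {M : ℕ} (u : ι → ZMod M) (j : ℕ)
    (ψ : QuditSpace ι M) (σ : ι → ZMod M) :
    ((Sop u) ^ j) ψ σ = ψ (σ - j • u) := by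
  induction j generalizing ψ σ with
  | zero => rw [pow_zero, zero_smul, sub_zero]; rfl
  | succ n ih =>
    rw [pow_succ]
    show ((Sop u) ^ n) (Sop u ψ) σ = _
    rw [ih]
    show ψ (σ - n • u - u) = ψ (σ - (n + 1) • u)
    rw [succ_nsmul, ← sub_sub]

lemma sop_pow_card {ι : Type*} (M : ℕ) (u : ι → ZMod M) : (Sop u) ^ M = 1 := by
  apply LinearMap.ext; intro ψ; funext σ
  rw [sop_pow_apply']
  have : (M : ℕ) • u = 0 := by
    funext b
    simp [nsmul_eq_mul, ZMod.natCast_self]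
  rw [this, sub_zero]
  rfl

lemma bhat_mul_starProj (v : Vertex Lx Ly) :
    Bhat M Lx Ly v * starProjM M Lx Ly v = starProjM M Lx Ly v := by
  unfold starProjM
  rw [mul_smul_comm, Finset.mul_sum]
  congr 1
  simp_rw [← pow_succ']
  have hM1 : (Bhat M Lx Ly v) ^ M = 1 := sop_pow_card M _
  have h1 := Finset.sum_range_succ' (fun j => (Bhat M Lx Ly v) ^ j) M
  have h2 := Finset.sum_range_succ (fun j => (Bhat M Lx Ly v) ^ j) M
  simp only [hM1, pow_zero] at h1 h2
  rw [h2] at h1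
  exact (add_right_cancel h1.symm)

lemma cop_delta0 {M : ℕ} [NeZero M] (u : Bond Lx Ly → ZMod M) :
    Cop u (delta0M M Lx Ly) = delta0M M Lx Ly := by
  funext σ
  show omegaM M ^ (∑ b, u b * σ b).val * delta0M M Lx Ly σ = delta0M M Lx Ly σ
  by_cases h : σ = 0
  · subst h
    simp [delta0M, Pi.zero_apply, ZMod.val_zero]
  · simp [delta0M, h]

lemma cop_starProj_commute (u : Bond Lx Ly → ZMod M) (v : Vertex Lx Ly)
    (h : ∑ b, u b * starVec M Lx Ly v b = 0) :
    Commute (Cop u) (starProjM M Lx Ly v) := by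
  have h1 : Commute (Cop u) (Bhat M Lx Ly v) := cop_sop_commute' _ _ h
  exact (Commute.sum_right _ _ _ fun j _ => h1.pow_right j).smul_right _

lemma cop_fix {M : ℕ} [NeZero M] (u : Bond Lx Ly → ZMod M)
    (h : ∀ v : Vertex Lx Ly, ∑ b, u b * starVec M Lx Ly v b = 0) :
    Cop u (PhiM M Lx Ly) = PhiM M Lx Ly := by
  unfold PhiM
  have hc : Commute (Cop u)
      (Finset.univ.noncommProd (fun v : Vertex Lx Ly => starProjM M Lx Ly v)
        (fun v _ w _ _ => starProjM_commute M Lx Ly v w)) :=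
    Finset.noncommProd_commute _ _ _ _ (fun v _ => cop_starProj_commute M Lx Ly u v (h v))
  calc Cop u ((Finset.univ.noncommProd (fun v : Vertex Lx Ly => starProjM M Lx Ly v)
        (fun v _ w _ _ => starProjM_commute M Lx Ly v w)) (delta0M M Lx Ly))
      = ((Finset.univ.noncommProd (fun v : Vertex Lx Ly => starProjM M Lx Ly v)
        (fun v _ w _ _ => starProjM_commute M Lx Ly v w)) * Cop u) (delta0M M Lx Ly) := by
        rw [← hc.eq]; rfl
    _ = _ := by
        show (Finset.univ.noncommProd (fun v : Vertex Lx Ly => starProjM M Lx Ly v)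
          (fun v _ w _ _ => starProjM_commute M Lx Ly v w)) (Cop u (delta0M M Lx Ly)) = _
        rw [cop_delta0]

lemma pair_star (u : Bond Lx Ly → ZMod M) (v : Vertex Lx Ly) :
    ∑ b, u b * starVec M Lx Ly v b
      = u (v, 0) + u (v, 1) - u ((v.1 - 1, v.2), 0) - u ((v.1, v.2 - 1), 1) := by
  unfold starVec
  simp only [mul_add, Finset.sum_add_distrib, mul_ite, mul_one, mul_zero, mul_neg,
    Finset.sum_ite_eq', Finset.mem_univ, if_true, Finset.sum_neg_distrib]
  ring

lemma plaq_star_orth (p v : Vertex Lx Ly) :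
    ∑ b, plaqVec M Lx Ly p b * starVec M Lx Ly v b = 0 := by
  rw [pair_star]
  have h01 : (0 : Fin 2) ≠ 1 := by decide
  have h10 : (1 : Fin 2) ≠ 0 := by decide
  simp only [plaqVec, Prod.mk.injEq, Prod.ext_iff, h01, h10, and_false, false_and, and_true,
    if_false, add_zero, zero_add, sub_eq_iff_eq_add]
  by_cases hA : v.1 = p.1 <;> by_cases hB : v.2 = p.2 <;>
    by_cases hC : v.1 = p.1 + 1 <;> by_cases hD : v.2 = p.2 + 1 <;>
    simp [hA, hB, hC, hD] <;> split_ifs <;> ring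

lemma wilson_star_orth (x : ZMod Lx) (v : Vertex Lx Ly) :
    ∑ b, (fun b : Bond Lx Ly => if b.1.1 = x ∧ b.2 = 1 then (1 : ZMod M) else 0) b
      * starVec M Lx Ly v b = 0 := by
  rw [pair_star]
  have h01 : (0 : Fin 2) ≠ 1 := by decide
  by_cases h : v.1 = x <;> simp [h, h01]

lemma sum_starProj {M : ℕ} [NeZero M] (hM : (M : ℂ) ≠ 0) (v : Vertex Lx Ly)
    (ψ : QuditSpace (Bond Lx Ly) M) :
    ∑ σ, starProjM M Lx Ly v ψ σ = ∑ σ, ψ σ := by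
  have happ : ∀ σ, starProjM M Lx Ly v ψ σ
      = (M : ℂ)⁻¹ * ∑ j ∈ Finset.range M, ψ (σ - j • starVec M Lx Ly v) := by
    intro σ
    show ((M : ℂ)⁻¹ • ((∑ j ∈ Finset.range M, (Bhat M Lx Ly v) ^ j) ψ)) σ = _
    rw [Pi.smul_apply, smul_eq_mul, LinearMap.sum_apply, Finset.sum_apply]
    congr 1
    exact Finset.sum_congr rfl fun j _ => sop_pow_apply' _ j ψ σ
  simp_rw [happ]
  rw [← Finset.mul_sum, Finset.sum_comm]
  have : ∀ j ∈ Finset.range M, ∑ σ : Bond Lx Ly → ZMod M, ψ (σ - j • starVec M Lx Ly v)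
      = ∑ σ, ψ σ := by
    intro j _
    exact Fintype.sum_equiv (Equiv.subRight (j • starVec M Lx Ly v)) _ _ (fun σ => rfl)
  rw [Finset.sum_congr rfl this, Finset.sum_const, Finset.card_range, nsmul_eq_mul,
    ← mul_assoc, inv_mul_cancel₀ hM, one_mul]

set_option maxHeartbeats 1000000 in
lemma sum_phiM {M : ℕ} [NeZero M] (hM : (M : ℂ) ≠ 0) :
    ∑ σ, PhiM M Lx Ly σ = 1 := by
  unfold PhiM
  have key : ∀ s : Finset (Vertex Lx Ly), ∀ ψ : QuditSpace (Bond Lx Ly) M,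
      ∑ σ, (s.noncommProd (fun v => starProjM M Lx Ly v)
        (fun v _ w _ _ => starProjM_commute M Lx Ly v w)) ψ σ = ∑ σ, ψ σ := by
    intro s
    induction s using Finset.induction_on with
    | empty => intro ψ; rfl
    | @insert a s ha ih =>
      intro ψ
      erw [Finset.noncommProd_insert_of_notMem _ _ _ _ ha]
      show ∑ σ, starProjM M Lx Ly a ((s.noncommProd (fun v => starProjM M Lx Ly v)
        (fun v _ w _ _ => starProjM_commute M Lx Ly v w)) ψ) σ = ∑ σ, ψ σ
      rw [sum_starProj Lx Ly hM]
      exact ih ψ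
  rw [key]
  simp [delta0M, Finset.sum_ite_eq']

lemma bhat_fix (v : Vertex Lx Ly) :
    Bhat M Lx Ly v (PhiM M Lx Ly) = PhiM M Lx Ly := by
  unfold PhiM
  have hP := Finset.mul_noncommProd_erase Finset.univ (Finset.mem_univ v)
    (fun v : Vertex Lx Ly => starProjM M Lx Ly v)
    (fun v _ w _ _ => starProjM_commute M Lx Ly v w)
  have hmul : Bhat M Lx Ly v * (Finset.univ.noncommProd
      (fun v : Vertex Lx Ly => starProjM M Lx Ly v)
      (fun v _ w _ _ => starProjM_commute M Lx Ly v w))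
      = Finset.univ.noncommProd (fun v : Vertex Lx Ly => starProjM M Lx Ly v)
        (fun v _ w _ _ => starProjM_commute M Lx Ly v w) := by
    rw [← hP, ← mul_assoc, bhat_mul_starProj]
  calc Bhat M Lx Ly v ((Finset.univ.noncommProd
        (fun v : Vertex Lx Ly => starProjM M Lx Ly v)
        (fun v _ w _ _ => starProjM_commute M Lx Ly v w)) (delta0M M Lx Ly))
      = (Bhat M Lx Ly v * (Finset.univ.noncommProd
        (fun v : Vertex Lx Ly => starProjM M Lx Ly v)
        (fun v _ w _ _ => starProjM_commute M Lx Ly v w))) (delta0M M Lx Ly) := rfl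
    _ = _ := by rw [hmul]

/-- the unnormalized `ℤ_M` zero-flux ground state
`Φ_M = (∏_v (1/M) ∑_{j<M} B̂_v^j) δ₀` is nonzero and is fixed by every
plaquette operator `Â_{(x,y)}`, every star operator `B̂_v`, and every vertical
clock Wilson loop `Ŵ_x`. -/
theorem PhiM_ground_state (M Lx Ly : ℕ) [NeZero Lx] [NeZero Ly]
    (hM : 2 ≤ M) (hLx : 2 ≤ Lx) (hLy : 2 ≤ Ly) :
    PhiM M Lx Ly ≠ 0 ∧
      (∀ v : Vertex Lx Ly, Ahat M Lx Ly v (PhiM M Lx Ly) = PhiM M Lx Ly) ∧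
      (∀ v : Vertex Lx Ly, Bhat M Lx Ly v (PhiM M Lx Ly) = PhiM M Lx Ly) ∧
      (∀ x : ZMod Lx, What M Lx Ly x (PhiM M Lx Ly) = PhiM M Lx Ly) := by
  haveI : NeZero M := ⟨by omega⟩
  have hMc : (M : ℂ) ≠ 0 := by
    exact_mod_cast Nat.cast_ne_zero.mpr (by omega)
  refine ⟨?_, ?_, ?_, ?_⟩
  · intro h
    have := sum_phiM Lx Ly hMc
    rw [h] at this
    simp at this
  · intro v
    exact cop_fix Lx Ly _ (fun w => plaq_star_orth M Lx Ly v w)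
  · intro v
    exact bhat_fix M Lx Ly v
  · intro x
    exact cop_fix Lx Ly _ (fun w => wilson_star_orth M Lx Ly x w)
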